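/- Let X_t and X_{t'} be jointly distributed finite random vectors with n components each, and let V_t be supervenient on X_t. Define Δ^(k) := max_{α⊆[n],|α|=k} ( I(V_t;X_{t'}^α) − Σ_{β⊆[n],|β|=k} I(X_t^β;X_{t'}^α) ). Assume: (whole-minus-sum) Syn^(k)(X;Y) ≥ I(X;Y) − Σ_{|β|=k} I(X^β;Y); and that the downward-causation index satisfies 𝒟^(k)(X_t;X_{t'}) ≥ Syn^(k)(X_t;X_{t'}^α) for every α ⊆ [n] with |α| = k. Then Δ^(k) ≤ 𝒟^(k)(X_t;X_{t'}); consequently Δ^(k) > 0 is a sufficient condition for the system to exhibit downward causation of order k (i.e. it implies 𝒟^(k)(X_t;X_{t'}) > 0). -/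

import Mathlib

/-!
Framework: finite probability.  A finite sample space `Ω` carries a probability
mass function `μ : Ω → ℝ`; random variables are functions on `Ω`.
-/

noncomputable section

open scoped BigOperators

attribute [local instance] Classical.propDecidable

variable {Ω : Type} [Fintype Ω]

/-- The probability that the random variable `f` takes the value `a`, under the pmf `μ`. -/
def prEq (μ : Ω → ℝ) {A : Type} (f : Ω → A) (a : A) : ℝ :=
  ∑ ω, if f ω = a then μ ω else 0

/-- `μ` is a probability mass function on the finite sample space `Ω`. -/
def IsPMF (μ : Ω → ℝ) : Prop :=
  (∀ ω, 0 ≤ μ ω) ∧ ∑ ω, μ ω = 1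

/-- The Markov chain `f − g − h`: `f` and `h` are conditionally independent given `g`. -/
def MarkovChain (μ : Ω → ℝ) {A B C : Type} (f : Ω → A) (g : Ω → B) (h : Ω → C) : Prop :=
  ∀ a b c,
    prEq μ (fun ω => (f ω, g ω, h ω)) (a, b, c) * prEq μ g b =
      prEq μ (fun ω => (f ω, g ω)) (a, b) * prEq μ (fun ω => (g ω, h ω)) (b, c)

/-- Statistical independence of two random variables. -/
def IndepRV (μ : Ω → ℝ) {A B : Type} (f : Ω → A) (g : Ω → B) : Prop :=
  ∀ a b, prEq μ (fun ω => (f ω, g ω)) (a, b) = prEq μ f a * prEq μ g b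

/-- Shannon mutual information `I(f;g)`. -/
def mutInfo (μ : Ω → ℝ) {A B : Type} (f : Ω → A) (g : Ω → B) : ℝ :=
  ∑ a ∈ Finset.univ.image f, ∑ b ∈ Finset.univ.image g,
    prEq μ (fun ω => (f ω, g ω)) (a, b) *
      Real.log (prEq μ (fun ω => (f ω, g ω)) (a, b) / (prEq μ f a * prEq μ g b))

/-- Conditional mutual information `I(f;g|h)`. -/
def condMutInfo (μ : Ω → ℝ) {A B C : Type} (f : Ω → A) (g : Ω → B) (h : Ω → C) : ℝ :=
  ∑ a ∈ Finset.univ.image f, ∑ b ∈ Finset.univ.image g, ∑ c ∈ Finset.univ.image h,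
    prEq μ (fun ω => (f ω, g ω, h ω)) (a, b, c) *
      Real.log ((prEq μ h c * prEq μ (fun ω => (f ω, g ω, h ω)) (a, b, c)) /
        (prEq μ (fun ω => (f ω, h ω)) (a, c) * prEq μ (fun ω => (g ω, h ω)) (b, c)))

/-- Conditional entropy `H(f|g)`. -/
def condEntropyRV (μ : Ω → ℝ) {A B : Type} (f : Ω → A) (g : Ω → B) : ℝ :=
  -∑ a ∈ Finset.univ.image f, ∑ b ∈ Finset.univ.image g,
    prEq μ (fun ω => (f ω, g ω)) (a, b) *
      Real.log (prEq μ (fun ω => (f ω, g ω)) (a, b) / prEq μ g b)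

/-- The sub-vector `X^α` of the random vector `X`, for a set of indices `α ⊆ [n]`. -/
def subvec {n : ℕ} {𝓧 : Fin n → Type} (X : Ω → ∀ i, 𝓧 i) (α : Finset (Fin n)) :
    Ω → ∀ i : α, 𝓧 i :=
  fun ω i => X ω i

/-- The collection of all subsets of `[n]` of cardinality `k`. -/
def kSets (n k : ℕ) : Finset (Finset (Fin n)) :=
  Finset.univ.filter fun α => α.card = k

/-!
STATEMENT 6.  With `Δ⁽ᵏ⁾ := max_{|α|=k} ( I(V_t;X_{t'}^α) − Σ_{|β|=k} I(X_t^β;X_{t'}^α) )`,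
assuming the whole-minus-sum property of `Syn⁽ᵏ⁾` and that the downward-causation index
satisfies `𝒟⁽ᵏ⁾(X_t;X_{t'}) ≥ Syn⁽ᵏ⁾(X_t;X_{t'}^α)` for every `|α| = k`, one has
`Δ⁽ᵏ⁾ ≤ 𝒟⁽ᵏ⁾(X_t;X_{t'})`; consequently `Δ⁽ᵏ⁾ > 0` implies `𝒟⁽ᵏ⁾(X_t;X_{t'}) > 0`
(downward causation of order `k`).

`V` is supervenient on `X = X_t`; `Syn T t` stands for `Syn⁽ᵏ⁾(X_t ; t)`;
`D = 𝒟⁽ᵏ⁾(X_t;X_{t'})`.  `hne` guarantees that the maximum is over a nonempty family.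
-/
section helpers
variable {A B C : Type} (μ : Ω → ℝ) (f : Ω → A) (g : Ω → B) (h : Ω → C)

lemma prEq_nonneg (hμ : ∀ ω, 0 ≤ μ ω) {A : Type} (f : Ω → A) (a : A) : 0 ≤ prEq μ f a := by
  apply Finset.sum_nonneg; intro ω _; split <;> simp [hμ ω]

lemma marg_mid (a : A) (c : C) :
    prEq μ (fun ω => (f ω, h ω)) (a, c)
      = ∑ b ∈ Finset.univ.image g, prEq μ (fun ω => (f ω, g ω, h ω)) (a, b, c) := by
  unfold prEq
  rw [Finset.sum_comm]
  refine Finset.sum_congr rfl fun ω _ => ?_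
  beta_reduce
  refine Eq.symm ((Finset.sum_eq_single_of_mem (g ω)
    (Finset.mem_image_of_mem g (Finset.mem_univ ω)) fun b _ hne => if_neg (fun hh => hne (congrArg (fun p => p.2.1) hh).symm)).trans ?_)
  split_ifs with h1 h2 <;> first | rfl | (exfalso; simp_all [Prod.ext_iff])

lemma marg_front (b : B) (c : C) :
    prEq μ (fun ω => (g ω, h ω)) (b, c)
      = ∑ a ∈ Finset.univ.image f, prEq μ (fun ω => (f ω, g ω, h ω)) (a, b, c) := by
  unfold prEq
  rw [Finset.sum_comm]
  refine Finset.sum_congr rfl fun ω _ => ?_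
  beta_reduce
  refine Eq.symm ((Finset.sum_eq_single_of_mem (f ω)
    (Finset.mem_image_of_mem f (Finset.mem_univ ω)) fun a _ hne => if_neg (fun hh => hne (congrArg (fun p => p.1) hh).symm)).trans ?_)
  split_ifs with h1 h2 <;> first | rfl | (exfalso; simp_all [Prod.ext_iff])

lemma marg_back (a : A) (b : B) :
    prEq μ (fun ω => (f ω, g ω)) (a, b)
      = ∑ c ∈ Finset.univ.image h, prEq μ (fun ω => (f ω, g ω, h ω)) (a, b, c) := by
  unfold prEq
  rw [Finset.sum_comm]
  refine Finset.sum_congr rfl fun ω _ => ?_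
  beta_reduce
  refine Eq.symm ((Finset.sum_eq_single_of_mem (h ω)
    (Finset.mem_image_of_mem h (Finset.mem_univ ω)) fun c _ hne => if_neg (fun hh => hne (congrArg (fun p => p.2.2) hh).symm)).trans ?_)
  split_ifs with h1 h2 <;> first | rfl | (exfalso; simp_all [Prod.ext_iff])

lemma marg_pair_right (a : A) :
    prEq μ f a = ∑ c ∈ Finset.univ.image h, prEq μ (fun ω => (f ω, h ω)) (a, c) := by
  unfold prEq
  rw [Finset.sum_comm]
  refine Finset.sum_congr rfl fun ω _ => ?_
  beta_reduce
  refine Eq.symm ((Finset.sum_eq_single_of_mem (h ω)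
    (Finset.mem_image_of_mem h (Finset.mem_univ ω)) fun c _ hne => if_neg (fun hh => hne (congrArg (fun p => p.2) hh).symm)).trans ?_)
  split_ifs with h1 h2 <;> first | rfl | (exfalso; simp_all [Prod.ext_iff])

lemma marg_pair_left (c : C) :
    prEq μ h c = ∑ a ∈ Finset.univ.image f, prEq μ (fun ω => (f ω, h ω)) (a, c) := by
  unfold prEq
  rw [Finset.sum_comm]
  refine Finset.sum_congr rfl fun ω _ => ?_
  beta_reduce
  refine Eq.symm ((Finset.sum_eq_single_of_mem (f ω)
    (Finset.mem_image_of_mem f (Finset.mem_univ ω)) fun a _ hne => if_neg (fun hh => hne (congrArg (fun p => p.1) hh).symm)).trans ?_)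
  split_ifs with h1 h2 <;> first | rfl | (exfalso; simp_all [Prod.ext_iff])

lemma total_pair (hμ : ∑ ω, μ ω = 1) :
    ∑ a ∈ Finset.univ.image f, ∑ c ∈ Finset.univ.image h,
      prEq μ (fun ω => (f ω, h ω)) (a, c) = 1 := by
  calc ∑ a ∈ Finset.univ.image f, ∑ c ∈ Finset.univ.image h,
      prEq μ (fun ω => (f ω, h ω)) (a, c)
      = ∑ a ∈ Finset.univ.image f, prEq μ f a := by
        refine Finset.sum_congr rfl fun a _ => (marg_pair_right μ f h a).symm
    _ = ∑ ω, μ ω := by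
        unfold prEq
        rw [Finset.sum_comm]
        refine Finset.sum_congr rfl fun ω _ => ?_
        refine (Finset.sum_eq_single_of_mem (f ω)
          (Finset.mem_image_of_mem f (Finset.mem_univ ω)) fun a _ hne => if_neg (fun hh => hne hh.symm)).trans ?_
        simp
    _ = 1 := hμ

end helpers

lemma dpi {A B C : Type} (μ : Ω → ℝ) (hpos : ∀ ω, 0 ≤ μ ω) (htot : ∑ ω, μ ω = 1)
    (f : Ω → A) (g : Ω → B) (h : Ω → C) (hM : MarkovChain μ f g h) :
    mutInfo μ f h ≤ mutInfo μ g h := by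
  set sa := Finset.univ.image f with hsa
  set sb := Finset.univ.image g with hsb
  set sc := Finset.univ.image h with hsc
  set p3 : A → B → C → ℝ := fun a b c => prEq μ (fun ω => (f ω, g ω, h ω)) (a, b, c) with hp3
  set pf : A → ℝ := fun a => prEq μ f a with hpf
  set pg : B → ℝ := fun b => prEq μ g b with hpg
  set ph : C → ℝ := fun c => prEq μ h c with hph
  set pfg : A → B → ℝ := fun a b => prEq μ (fun ω => (f ω, g ω)) (a, b) with hpfg
  set pgh : B → C → ℝ := fun b c => prEq μ (fun ω => (g ω, h ω)) (b, c) with hpgh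
  set pfh : A → C → ℝ := fun a c => prEq μ (fun ω => (f ω, h ω)) (a, c) with hpfh
  have h3n : ∀ a b c, 0 ≤ p3 a b c := fun a b c => prEq_nonneg μ hpos _ _
  have hfhM : ∀ a c, pfh a c = ∑ b ∈ sb, p3 a b c := fun a c => marg_mid μ f g h a c
  have hghM : ∀ b c, pgh b c = ∑ a ∈ sa, p3 a b c := fun b c => marg_front μ f g h b c
  have hfgM : ∀ a b, pfg a b = ∑ c ∈ sc, p3 a b c := fun a b => marg_back μ f g h a b
  have hfM : ∀ a, pf a = ∑ b ∈ sb, pfg a b := fun a => marg_pair_right μ f g a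
  have hgM : ∀ b, pg b = ∑ c ∈ sc, pgh b c := fun b => marg_pair_right μ g h b
  have hhM : ∀ c, ph c = ∑ a ∈ sa, pfh a c := fun c => marg_pair_left μ f h c
  have hfhn : ∀ a c, 0 ≤ pfh a c := fun a c => prEq_nonneg μ hpos _ _
  have hfgn : ∀ a b, 0 ≤ pfg a b := fun a b => prEq_nonneg μ hpos _ _
  have hghn : ∀ b c, 0 ≤ pgh b c := fun b c => prEq_nonneg μ hpos _ _
  have hfn : ∀ a, 0 ≤ pf a := fun a => prEq_nonneg μ hpos _ _
  -- pointwise bounds with membership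
  have hle_fh : ∀ a, ∀ b ∈ sb, ∀ c, p3 a b c ≤ pfh a c := fun a b hb c => by
    rw [hfhM]; exact Finset.single_le_sum (fun b' _ => h3n a b' c) hb
  have hle_gh : ∀ a, ∀ c, a ∈ sa → ∀ b, p3 a b c ≤ pgh b c := fun a c ha b => by
    rw [hghM]; exact Finset.single_le_sum (fun a' _ => h3n a' b c) ha
  have hle_fg : ∀ a b, ∀ c ∈ sc, p3 a b c ≤ pfg a b := fun a b c hc => by
    rw [hfgM]; exact Finset.single_le_sum (fun c' _ => h3n a b c') hc
  have hle_f : ∀ a, ∀ b ∈ sb, pfg a b ≤ pf a := fun a b hb => by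
    rw [hfM]; exact Finset.single_le_sum (fun b' _ => hfgn a b') hb
  have hle_g : ∀ b, ∀ c ∈ sc, pgh b c ≤ pg b := fun b c hc => by
    rw [hgM]; exact Finset.single_le_sum (fun c' _ => hghn b c') hc
  have hle_h : ∀ c, ∀ a ∈ sa, pfh a c ≤ ph c := fun c a ha => by
    rw [hhM]; exact Finset.single_le_sum (fun a' _ => hfhn a' c) ha
  have hfM2 : ∀ a, pf a = ∑ c ∈ sc, pfh a c := fun a => marg_pair_right μ f h a
  have hfh_le_f : ∀ a, ∀ c ∈ sc, pfh a c ≤ pf a := fun a c hc => by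
    rw [hfM2]; exact Finset.single_le_sum (fun c' _ => hfhn a c') hc
  set Lf : A → C → ℝ := fun a c => Real.log (pfh a c / (pf a * ph c)) with hLf
  set Lg : B → C → ℝ := fun b c => Real.log (pgh b c / (pg b * ph c)) with hLg
  -- the pointwise key inequality
  have key : ∀ a ∈ sa, ∀ b ∈ sb, ∀ c ∈ sc,
      p3 a b c * Lf a c - p3 a b c * Lg b c
        ≤ pfg a b * pfh a c / pf a - p3 a b c := by
    intro a ha b hb c hc
    by_cases hz : p3 a b c = 0
    · rw [hz]
      simp only [zero_mul, sub_zero, sub_self]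
      exact div_nonneg (mul_nonneg (hfgn a b) (hfhn a c)) (hfn a)
    · have h3p : 0 < p3 a b c := lt_of_le_of_ne (h3n a b c) (Ne.symm hz)
      have hpfhp : 0 < pfh a c := lt_of_lt_of_le h3p (hle_fh a b hb c)
      have hpghp : 0 < pgh b c := lt_of_lt_of_le h3p (hle_gh a c ha b)
      have hpfgp : 0 < pfg a b := lt_of_lt_of_le h3p (hle_fg a b c hc)
      have hpfp : 0 < pf a := lt_of_lt_of_le hpfgp (hle_f a b hb)
      have hpgp : 0 < pg b := lt_of_lt_of_le hpghp (hle_g b c hc)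
      have hphp : 0 < ph c := lt_of_lt_of_le hpfhp (hle_h c a ha)
      set R : ℝ := pfh a c * pg b / (pf a * pgh b c) with hR
      have hRp : 0 < R := div_pos (mul_pos hpfhp hpgp) (mul_pos hpfp hpghp)
      have hlogR : Lf a c - Lg b c = Real.log R := by
        rw [hLf, hLg, hR]
        beta_reduce
        rw [Real.log_div (by positivity) (by positivity),
            Real.log_div (by positivity) (by positivity),
            Real.log_div (by positivity) (by positivity),
            Real.log_mul (by positivity) (by positivity),
            Real.log_mul (by positivity) (by positivity),
            Real.log_mul (by positivity) (by positivity),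
            Real.log_mul (by positivity) (by positivity)]
        ring
      have hRval : p3 a b c * R = pfg a b * pfh a c / pf a := by
        have hmk : p3 a b c * pg b = pfg a b * pgh b c := hM a b c
        rw [hR]
        field_simp
        linear_combination hmk
      calc p3 a b c * Lf a c - p3 a b c * Lg b c
          = p3 a b c * Real.log R := by rw [← hlogR]; ring
        _ ≤ p3 a b c * (R - 1) :=
            mul_le_mul_of_nonneg_left (Real.log_le_sub_one_of_pos hRp) (h3n a b c)
        _ = pfg a b * pfh a c / pf a - p3 a b c := by rw [mul_sub, hRval]; ring
  -- rewrite the two mutual informations as triple sums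
  have EQ1 : mutInfo μ f h = ∑ a ∈ sa, ∑ b ∈ sb, ∑ c ∈ sc, p3 a b c * Lf a c := by
    have e1 : mutInfo μ f h = ∑ a ∈ sa, ∑ c ∈ sc, pfh a c * Lf a c := rfl
    rw [e1]
    refine Finset.sum_congr rfl fun a _ => ?_
    rw [Finset.sum_comm]
    refine Finset.sum_congr rfl fun c _ => ?_
    rw [hfhM a c, Finset.sum_mul]
  have EQ2 : mutInfo μ g h = ∑ a ∈ sa, ∑ b ∈ sb, ∑ c ∈ sc, p3 a b c * Lg b c := by
    have e2 : mutInfo μ g h = ∑ b ∈ sb, ∑ c ∈ sc, pgh b c * Lg b c := rfl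
    rw [e2]
    have e3 : ∀ b ∈ sb, ∑ c ∈ sc, pgh b c * Lg b c
        = ∑ a ∈ sa, ∑ c ∈ sc, p3 a b c * Lg b c := by
      intro b _
      rw [Finset.sum_comm]
      refine Finset.sum_congr rfl fun c _ => ?_
      rw [hghM b c, Finset.sum_mul]
    rw [Finset.sum_congr rfl e3, Finset.sum_comm]
  -- the two normalization identities
  have S2 : ∑ a ∈ sa, ∑ b ∈ sb, ∑ c ∈ sc, p3 a b c = 1 := by
    have : ∀ a ∈ sa, ∑ b ∈ sb, ∑ c ∈ sc, p3 a b c = ∑ c ∈ sc, pfh a c := by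
      intro a _
      rw [Finset.sum_comm]
      exact Finset.sum_congr rfl fun c _ => (hfhM a c).symm
    rw [Finset.sum_congr rfl this]
    exact total_pair μ f h htot
  have S1 : ∑ a ∈ sa, ∑ b ∈ sb, ∑ c ∈ sc, pfg a b * pfh a c / pf a = 1 := by
    have step : ∀ a ∈ sa, ∑ b ∈ sb, ∑ c ∈ sc, pfg a b * pfh a c / pf a
        = ∑ c ∈ sc, pfh a c := by
      intro a _
      rw [Finset.sum_comm]
      refine Finset.sum_congr rfl fun c hc => ?_
      have : ∑ b ∈ sb, pfg a b * pfh a c / pf a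
          = (∑ b ∈ sb, pfg a b) * pfh a c / pf a := by
        rw [Finset.sum_mul, Finset.sum_div]
      rw [this, ← hfM a]
      by_cases hpa : pf a = 0
      · have : pfh a c = 0 :=
          le_antisymm (hpa ▸ hfh_le_f a c hc) (hfhn a c)
        rw [this, hpa]; simp
      · field_simp
    rw [Finset.sum_congr rfl step]
    exact total_pair μ f h htot
  -- combine
  have main : mutInfo μ f h - mutInfo μ g h ≤ 0 := by
    rw [EQ1, EQ2]
    have : ∑ a ∈ sa, ∑ b ∈ sb, ∑ c ∈ sc, p3 a b c * Lf a c
        - ∑ a ∈ sa, ∑ b ∈ sb, ∑ c ∈ sc, p3 a b c * Lg b c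
        = ∑ a ∈ sa, ∑ b ∈ sb, ∑ c ∈ sc, (p3 a b c * Lf a c - p3 a b c * Lg b c) := by
      rw [← Finset.sum_sub_distrib]
      refine Finset.sum_congr rfl fun a _ => ?_
      rw [← Finset.sum_sub_distrib]
      refine Finset.sum_congr rfl fun b _ => ?_
      rw [← Finset.sum_sub_distrib]
    rw [this]
    calc ∑ a ∈ sa, ∑ b ∈ sb, ∑ c ∈ sc, (p3 a b c * Lf a c - p3 a b c * Lg b c)
        ≤ ∑ a ∈ sa, ∑ b ∈ sb, ∑ c ∈ sc, (pfg a b * pfh a c / pf a - p3 a b c) := by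
          refine Finset.sum_le_sum fun a ha => Finset.sum_le_sum fun b hb =>
            Finset.sum_le_sum fun c hc => key a ha b hb c hc
      _ = 0 := by
          have : ∑ a ∈ sa, ∑ b ∈ sb, ∑ c ∈ sc, (pfg a b * pfh a c / pf a - p3 a b c)
              = (∑ a ∈ sa, ∑ b ∈ sb, ∑ c ∈ sc, pfg a b * pfh a c / pf a)
                - ∑ a ∈ sa, ∑ b ∈ sb, ∑ c ∈ sc, p3 a b c := by
            rw [← Finset.sum_sub_distrib]
            refine Finset.sum_congr rfl fun a _ => ?_
            rw [← Finset.sum_sub_distrib]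
            refine Finset.sum_congr rfl fun b _ => ?_
            rw [← Finset.sum_sub_distrib]
          rw [this, S1, S2]; ring
  linarith

lemma prEq_comp_triple {A B C C' : Type} (μ : Ω → ℝ) (f : Ω → A) (g : Ω → B) (h : Ω → C)
    (φ : C → C') (a : A) (b : B) (c : C') :
    prEq μ (fun ω => (f ω, g ω, φ (h ω))) (a, b, c)
      = ∑ c' ∈ (Finset.univ.image h).filter (fun c' => φ c' = c),
          prEq μ (fun ω => (f ω, g ω, h ω)) (a, b, c') := by
  unfold prEq
  rw [Finset.sum_comm]
  refine Finset.sum_congr rfl fun ω _ => ?_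
  beta_reduce
  by_cases hφ : φ (h ω) = c
  · refine Eq.symm ((Finset.sum_eq_single_of_mem (h ω)
      (Finset.mem_filter.2 ⟨Finset.mem_image_of_mem h (Finset.mem_univ ω), hφ⟩)
      fun c' _ hne => if_neg (fun hh => hne (congrArg (fun p => p.2.2) hh).symm)).trans ?_)
    split_ifs with h1 h2 <;> first | rfl | (exfalso; simp_all [Prod.ext_iff])
  · rw [if_neg (by simp [Prod.ext_iff]; tauto)]
    refine Eq.symm (Finset.sum_eq_zero fun c' hc' => if_neg fun hh => ?_)
    have h1 : h ω = c' := (congrArg (fun p => p.2.2) hh)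
    exact hφ (h1 ▸ (Finset.mem_filter.1 hc').2)

lemma prEq_comp_pair {B C C' : Type} (μ : Ω → ℝ) (g : Ω → B) (h : Ω → C)
    (φ : C → C') (b : B) (c : C') :
    prEq μ (fun ω => (g ω, φ (h ω))) (b, c)
      = ∑ c' ∈ (Finset.univ.image h).filter (fun c' => φ c' = c),
          prEq μ (fun ω => (g ω, h ω)) (b, c') := by
  unfold prEq
  rw [Finset.sum_comm]
  refine Finset.sum_congr rfl fun ω _ => ?_
  beta_reduce
  by_cases hφ : φ (h ω) = c
  · refine Eq.symm ((Finset.sum_eq_single_of_mem (h ω)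
      (Finset.mem_filter.2 ⟨Finset.mem_image_of_mem h (Finset.mem_univ ω), hφ⟩)
      fun c' _ hne => if_neg (fun hh => hne (congrArg (fun p => p.2) hh).symm)).trans ?_)
    split_ifs with h1 h2 <;> first | rfl | (exfalso; simp_all [Prod.ext_iff])
  · rw [if_neg (by simp [Prod.ext_iff]; tauto)]
    refine Eq.symm (Finset.sum_eq_zero fun c' hc' => if_neg fun hh => ?_)
    have h1 : h ω = c' := (congrArg (fun p => p.2) hh)
    exact hφ (h1 ▸ (Finset.mem_filter.1 hc').2)

lemma markov_comp {A B C C' : Type} (μ : Ω → ℝ) (f : Ω → A) (g : Ω → B) (h : Ω → C)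
    (φ : C → C') (hM : MarkovChain μ f g h) :
    MarkovChain μ f g (fun ω => φ (h ω)) := by
  intro a b c
  rw [prEq_comp_triple μ f g h φ a b c, prEq_comp_pair μ g h φ b c,
      Finset.sum_mul, Finset.mul_sum]
  exact Finset.sum_congr rfl fun c' _ => hM a b c'

theorem delta_positive_sufficient_for_downward_causation
    {Ω : Type} [Fintype Ω] (μ : Ω → ℝ) (hμ : IsPMF μ)
    {n : ℕ} {𝓧 𝓨 : Fin n → Type} [∀ i, Fintype (𝓧 i)] [∀ i, Fintype (𝓨 i)]
    (X : Ω → ∀ i, 𝓧 i) (X' : Ω → ∀ i, 𝓨 i)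
    {𝓥 : Type} [Fintype 𝓥] (V : Ω → 𝓥)
    (k : ℕ) (hne : (kSets n k).Nonempty)
    (hsup : MarkovChain μ V X X')
    (Syn : (T : Type) → (Ω → T) → ℝ)
    (D : ℝ)
    (hwms : ∀ (T : Type) (Y : Ω → T),
      mutInfo μ X Y - ∑ β ∈ kSets n k, mutInfo μ (subvec X β) Y ≤ Syn T Y)
    (hD_lb : ∀ α ∈ kSets n k, Syn (∀ i : α, 𝓨 i) (subvec X' α) ≤ D) :
    (kSets n k).sup' hne (fun α =>
        mutInfo μ V (subvec X' α)
          - ∑ β ∈ kSets n k, mutInfo μ (subvec X β) (subvec X' α)) ≤ D ∧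
      (0 < (kSets n k).sup' hne (fun α =>
          mutInfo μ V (subvec X' α)
            - ∑ β ∈ kSets n k, mutInfo μ (subvec X β) (subvec X' α)) →
        0 < D) := by
  have main : ∀ α ∈ kSets n k,
      mutInfo μ V (subvec X' α)
        - ∑ β ∈ kSets n k, mutInfo μ (subvec X β) (subvec X' α) ≤ D := by
    intro α hα
    have hmc : MarkovChain μ V X (subvec X' α) :=
      markov_comp μ V X X' (fun x (i : α) => x i) hsup
    have hdpi : mutInfo μ V (subvec X' α) ≤ mutInfo μ X (subvec X' α) :=
      dpi μ hμ.1 hμ.2 V X (subvec X' α) hmc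
    have h1 := hwms _ (subvec X' α)
    have h2 := hD_lb α hα
    linarith
  have hsup' : (kSets n k).sup' hne (fun α =>
      mutInfo μ V (subvec X' α)
        - ∑ β ∈ kSets n k, mutInfo μ (subvec X β) (subvec X' α)) ≤ D :=
    Finset.sup'_le hne _ main
  exact ⟨hsup', fun hp => lt_of_lt_of_le hp hsup'⟩
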